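/- Let ρ : {−1,1}ⁿ → 𝒮(ℋ) be a density-matrix-valued function on a Hilbert space ℋ of dimension 2^c. Then for any ℓ ∈ ℕ, Σ_{|S|=ℓ} (Tr|ρ̂(S)|)² ≤ 2^{O(ℓ)}·((c/ℓ)^ℓ + 1), where ρ̂(S) = E_x[ρ(x)χ_S(x)] and |A| = √(A A†). -/

import Mathlib

section
open scoped ComplexOrder

/-- The positive semidefinite square root of a positive semidefinite matrix
(the definition removed from Mathlib, restored with its old meaning). -/
noncomputable def Matrix.PosSemidef.sqrt {n 𝕜 : Type*} [RCLike 𝕜] [Fintype n] [DecidableEq n]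
    {A : Matrix n n 𝕜} (hA : A.PosSemidef) : Matrix n n 𝕜 :=
  hA.1.eigenvectorUnitary.1 * Matrix.diagonal ((↑) ∘ (√·) ∘ hA.1.eigenvalues) *
    (star hA.1.eigenvectorUnitary : Matrix n n 𝕜)

end

set_option maxHeartbeats 1000000

open Matrix Finset

open scoped MatrixOrder in
private theorem psdSqrt_eq_cfc {d : Type*} [Fintype d] [DecidableEq d] {A : Matrix d d ℝ}
    (hA : A.PosSemidef) : hA.sqrt = CFC.sqrt A := by
  rw [CFC.sqrt_eq_real_sqrt A hA.nonneg, cfcₙ_eq_cfc (hf0 := Real.sqrt_zero), hA.1.cfc_eq,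
    Matrix.IsHermitian.cfc, Unitary.conjStarAlgAut_apply]
  rfl

open scoped MatrixOrder in
private theorem psdSqrt_mul_self {d : Type*} [Fintype d] [DecidableEq d] {A : Matrix d d ℝ}
    (hA : A.PosSemidef) : hA.sqrt * hA.sqrt = A := by
  rw [psdSqrt_eq_cfc]; exact CFC.sqrt_mul_sqrt_self A hA.nonneg

open scoped MatrixOrder in
private theorem psdSqrt_psd {d : Type*} [Fintype d] [DecidableEq d] {A : Matrix d d ℝ}
    (hA : A.PosSemidef) : hA.sqrt.PosSemidef := by
  rw [psdSqrt_eq_cfc]; exact Matrix.nonneg_iff_posSemidef.mp (CFC.sqrt_nonneg A)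

open scoped MatrixOrder in
private theorem psdSqrt_unique {d : Type*} [Fintype d] [DecidableEq d] {A B : Matrix d d ℝ}
    (hB : B.PosSemidef) (hA : A.PosSemidef) (h : B ^ 2 = A) : B = hA.sqrt := by
  rw [psdSqrt_eq_cfc]; exact (CFC.sqrt_unique (by rw [← sq]; exact h) hB.nonneg).symm

private theorem psd_exists_eq {d : Type*} [Fintype d] [DecidableEq d] {A : Matrix d d ℝ}
    (hA : A.PosSemidef) : ∃ X : Matrix d d ℝ, A = Xᴴ * X :=
  ⟨hA.sqrt, by rw [(psdSqrt_psd hA).1.eq, psdSqrt_mul_self]⟩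

/-! ### Matrix preliminaries -/

section MatrixFacts

variable {d : Type*} [Fintype d] [DecidableEq d]

private lemma trace_mul_expand (M N : Matrix d d ℝ) :
    (M * N).trace = ∑ p : d × d, M p.1 p.2 * N p.2 p.1 := by
  simp [Matrix.trace, Matrix.mul_apply, Matrix.diag, Fintype.sum_prod_type]

private lemma trace_cs (A B : Matrix d d ℝ) :
    ((A * B).trace) ^ 2 ≤ (A * Aᴴ).trace * (B * Bᴴ).trace := by
  have h1 : (A * Aᴴ).trace = ∑ p : d × d, (A p.1 p.2) ^ 2 := by
    rw [trace_mul_expand]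
    exact Finset.sum_congr rfl fun p _ => by
      simp [Matrix.conjTranspose_apply, sq]
  have h2 : (B * Bᴴ).trace = ∑ p : d × d, (B p.2 p.1) ^ 2 := by
    rw [trace_mul_expand]
    have : ∑ p : d × d, B p.1 p.2 * Bᴴ p.2 p.1 = ∑ p : d × d, (B p.1 p.2) ^ 2 :=
      Finset.sum_congr rfl fun p _ => by simp [Matrix.conjTranspose_apply, sq]
    rw [this, Fintype.sum_prod_type, Fintype.sum_prod_type]
    exact Finset.sum_comm
  rw [trace_mul_expand A B, h1, h2]
  exact Finset.sum_mul_sq_le_sq_mul_sq univ _ _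

private lemma trace_self_mul_conjTranspose_nonneg (M : Matrix d d ℝ) :
    0 ≤ (M * Mᴴ).trace := by
  rw [trace_mul_expand]
  refine Finset.sum_nonneg fun p _ => ?_
  simp only [Matrix.conjTranspose_apply]
  rw [star_trivial]
  exact mul_self_nonneg _

private lemma trace_mul_nonneg {A B : Matrix d d ℝ} (hA : A.PosSemidef) (hB : B.PosSemidef) :
    0 ≤ (A * B).trace := by
  obtain ⟨X, hX⟩ := psd_exists_eq hA
  obtain ⟨Y, hY⟩ := psd_exists_eq hB
  have key : (A * B).trace = ((X * Yᴴ) * (X * Yᴴ)ᴴ).trace := by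
    rw [hX, hY, Matrix.conjTranspose_mul, Matrix.conjTranspose_conjTranspose]
    rw [show Xᴴ * X * (Yᴴ * Y) = Xᴴ * (X * Yᴴ * Y) by simp only [mul_assoc]]
    rw [Matrix.trace_mul_comm]
    simp only [mul_assoc]
  rw [key]
  exact trace_self_mul_conjTranspose_nonneg _

private lemma trace_mul_mono {A B C : Matrix d d ℝ} (hC : C.PosSemidef)
    (hBA : (B - A).PosSemidef) : (C * A).trace ≤ (C * B).trace := by
  have h := trace_mul_nonneg hC hBA
  rw [Matrix.mul_sub, Matrix.trace_sub] at h
  linarith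

private lemma quad_le_trace {B : Matrix d d ℝ} (hB : B.PosSemidef) (x : d → ℝ) :
    x ⬝ᵥ (B *ᵥ x) ≤ B.trace * (x ⬝ᵥ x) := by
  obtain ⟨X, rfl⟩ := psd_exists_eq hB
  have h1 : x ⬝ᵥ ((Xᴴ * X) *ᵥ x) = (X *ᵥ x) ⬝ᵥ (X *ᵥ x) := by
    rw [← Matrix.mulVec_mulVec, Matrix.dotProduct_mulVec x Xᴴ _]
    congr 1
    rw [Matrix.vecMul_conjTranspose]
    simp
  have h2 : (Xᴴ * X).trace = ∑ k : d, ∑ i : d, (X k i) ^ 2 := by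
    rw [trace_mul_expand]
    have : ∑ p : d × d, Xᴴ p.1 p.2 * X p.2 p.1 = ∑ p : d × d, (X p.2 p.1) ^ 2 :=
      Finset.sum_congr rfl fun p _ => by simp [Matrix.conjTranspose_apply, sq]
    rw [this, Fintype.sum_prod_type]
    exact Finset.sum_comm
  rw [h1, h2]
  have h3 : (X *ᵥ x) ⬝ᵥ (X *ᵥ x) = ∑ k : d, (∑ i : d, X k i * x i) ^ 2 := by
    simp [dotProduct, Matrix.mulVec, sq]
  rw [h3, Finset.sum_mul]
  refine Finset.sum_le_sum fun k _ => ?_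
  have := Finset.sum_mul_sq_le_sq_mul_sq univ (fun i => X k i) x
  calc (∑ i : d, X k i * x i) ^ 2 ≤ (∑ i : d, (X k i) ^ 2) * (∑ i : d, (x i) ^ 2) := this
    _ = (∑ i : d, X k i ^ 2) * (x ⬝ᵥ x) := by simp [dotProduct, sq]

private lemma psd_le_trace_one {B : Matrix d d ℝ} (hB : B.PosSemidef) :
    (B.trace • (1 : Matrix d d ℝ) - B).PosSemidef := by
  refine Matrix.PosSemidef.of_dotProduct_mulVec_nonneg ?_ ?_
  · show (B.trace • (1 : Matrix d d ℝ) - B)ᴴ = _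
    rw [Matrix.conjTranspose_sub, Matrix.conjTranspose_smul, Matrix.conjTranspose_one,
      hB.1.eq, star_trivial]
  · intro x
    have h := quad_le_trace hB x
    have hx : star x = x := by
      funext j; simp
    rw [hx]
    rw [Matrix.sub_mulVec, dotProduct_sub, Matrix.smul_mulVec,
      Matrix.one_mulVec, dotProduct_smul]
    rw [smul_eq_mul]
    linarith

private lemma trace_mul_le_trace {C ρ : Matrix d d ℝ} (hC : C.PosSemidef)
    (hρ : ρ.PosSemidef) (hτ : ρ.trace = 1) : (C * ρ).trace ≤ C.trace := by
  have h1 : ((1 : Matrix d d ℝ) - ρ).PosSemidef := by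
    have := psd_le_trace_one hρ
    rwa [hτ, one_smul] at this
  have := trace_mul_mono hC h1
  simpa using this

private lemma trace_mul_sq_le {M ρ : Matrix d d ℝ} (hM : M.IsHermitian) (hρ : ρ.PosSemidef)
    (hτ : ρ.trace = 1) : ((M * ρ).trace) ^ 2 ≤ (M * M * ρ).trace := by
  set s := hρ.sqrt with hs_def
  have hs : s * s = ρ := psdSqrt_mul_self hρ
  have hsh : sᴴ = s := (psdSqrt_psd hρ).1
  have h1 : (s * (M * s)).trace = (M * ρ).trace := by
    rw [Matrix.trace_mul_comm, mul_assoc, hs]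
  have hcs := trace_cs s (M * s)
  rw [h1] at hcs
  have h2 : (s * sᴴ).trace = 1 := by rw [hsh, hs, hτ]
  have h3 : ((M * s) * (M * s)ᴴ).trace = (M * M * ρ).trace := by
    rw [Matrix.conjTranspose_mul, hsh, hM.eq]
    calc (M * s * (s * M)).trace = (M * (s * (s * M))).trace := by simp only [mul_assoc]
      _ = ((s * (s * M)) * M).trace := Matrix.trace_mul_comm _ _
      _ = (M * M * ρ).trace := by
          rw [show s * (s * M) * M = (s * s) * (M * M) by simp only [mul_assoc], hs]
          exact Matrix.trace_mul_comm _ _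
  rw [h2, h3, one_mul] at hcs
  exact hcs

private lemma trace_pow_le {ρ : Matrix d d ℝ} (hρ : ρ.PosSemidef) (hτ : ρ.trace = 1) :
    ∀ (k : ℕ) {M : Matrix d d ℝ}, M.IsHermitian →
      ((M * ρ).trace) ^ (2 * 2 ^ k) ≤ (M ^ (2 * 2 ^ k) * ρ).trace := by
  intro k
  induction k with
  | zero =>
    intro M hM
    simpa [pow_two] using trace_mul_sq_le hM hρ hτ
  | succ k ih =>
    intro M hM
    have e1 : 2 * 2 ^ (k + 1) = (2 * 2 ^ k) * 2 := by ring
    rw [e1, pow_mul ((M * ρ).trace) (2 * 2 ^ k) 2]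
    have h0 : (0:ℝ) ≤ ((M * ρ).trace) ^ (2 * 2 ^ k) := by
      have : Even (2 * 2 ^ k) := even_two_mul _
      exact this.pow_nonneg _
    have h1 : (((M * ρ).trace) ^ (2 * 2 ^ k)) ^ 2 ≤ ((M ^ (2 * 2 ^ k) * ρ).trace) ^ 2 :=
      pow_le_pow_left₀ h0 (ih hM) 2
    have h2 : ((M ^ (2 * 2 ^ k) * ρ).trace) ^ 2 ≤ ((M ^ (2 * 2 ^ k)) * (M ^ (2 * 2 ^ k)) * ρ).trace :=
      trace_mul_sq_le (hM.pow _) hρ hτ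
    calc (((M * ρ).trace) ^ (2 * 2 ^ k)) ^ 2 ≤ ((M ^ (2 * 2 ^ k) * ρ).trace) ^ 2 := h1
      _ ≤ ((M ^ (2 * 2 ^ k)) * (M ^ (2 * 2 ^ k)) * ρ).trace := h2
      _ = ((M ^ (2 * 2 ^ k)) ^ 2 * ρ).trace := by rw [sq]
      _ = (M ^ (2 * 2 ^ k * 2) * ρ).trace := by rw [← pow_mul]

private lemma herm_pow_even_psd {M : Matrix d d ℝ} (hM : M.IsHermitian) (p : ℕ) :
    (M ^ (2 * p)).PosSemidef := by
  have : M ^ (2 * p) = (M ^ p)ᴴ * (M ^ p) := by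
    rw [(hM.pow p).eq, ← pow_add, two_mul]
  rw [this]
  exact Matrix.posSemidef_conjTranspose_mul_self _

/-- Duality for the trace norm of a real symmetric matrix: the trace of `√(A Aᴴ)` is
realized as `(U * A).trace` for an orthogonal `U`. -/
private lemma sign_dual (A : Matrix d d ℝ) (hA : A.IsHermitian) :
    ∃ U : Matrix d d ℝ, U.IsHermitian ∧ Uᴴ * U = 1 ∧
      (U * A).trace = ((Matrix.posSemidef_self_mul_conjTranspose A).sqrt).trace ∧
      0 ≤ (U * A).trace := by
  classical
  set W : Matrix d d ℝ := (hA.eigenvectorUnitary : Matrix d d ℝ) with hW_def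
  set lam : d → ℝ := hA.eigenvalues with hlam_def
  have hWW : W * Wᴴ = 1 := by
    rw [← Matrix.star_eq_conjTranspose]
    exact Matrix.mem_unitaryGroup_iff.mp hA.eigenvectorUnitary.2
  have hWW' : Wᴴ * W = 1 := by
    rw [← Matrix.star_eq_conjTranspose]
    exact Matrix.mem_unitaryGroup_iff'.mp hA.eigenvectorUnitary.2
  have hspec : A = W * Matrix.diagonal lam * Wᴴ := by
    have := hA.spectral_theorem
    rw [Unitary.conjStarAlgAut_apply] at this
    rw [← Matrix.star_eq_conjTranspose]
    exact this
  set sgn : d → ℝ := fun i => if lam i < 0 then -1 else 1 with hsgn_def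
  set U : Matrix d d ℝ := W * Matrix.diagonal sgn * Wᴴ with hU_def
  have hdiagH : ∀ v : d → ℝ, (Matrix.diagonal v)ᴴ = Matrix.diagonal v := by
    intro v; rw [Matrix.diagonal_conjTranspose]; simp
  have hsgn2 : Matrix.diagonal sgn * Matrix.diagonal sgn = 1 := by
    rw [Matrix.diagonal_mul_diagonal]
    have h : (fun i => sgn i * sgn i) = fun _ => (1:ℝ) := by
      funext i; simp only [hsgn_def]; split_ifs <;> norm_num
    rw [h, Matrix.diagonal_one]
  have hUherm : U.IsHermitian := by
    show Uᴴ = U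
    rw [hU_def, Matrix.conjTranspose_mul, Matrix.conjTranspose_mul, hdiagH,
      Matrix.conjTranspose_conjTranspose, mul_assoc]
  have hUU : Uᴴ * U = 1 := by
    rw [hUherm.eq, hU_def]
    calc W * Matrix.diagonal sgn * Wᴴ * (W * Matrix.diagonal sgn * Wᴴ)
        = W * (Matrix.diagonal sgn * ((Wᴴ * W) * (Matrix.diagonal sgn * Wᴴ))) := by
          simp only [mul_assoc]
      _ = W * (Matrix.diagonal sgn * Matrix.diagonal sgn) * Wᴴ := by
          rw [hWW', one_mul]; simp only [mul_assoc]
      _ = 1 := by rw [hsgn2, mul_one, hWW]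
  have habs : Matrix.diagonal sgn * Matrix.diagonal lam = Matrix.diagonal (fun i => |lam i|) := by
    rw [Matrix.diagonal_mul_diagonal]
    have h : (fun i => sgn i * lam i) = fun i => |lam i| := by
      funext i
      simp only [hsgn_def]
      split_ifs with h
      · rw [abs_of_neg h]; ring
      · rw [abs_of_nonneg (not_lt.mp h)]; ring
    rw [h]
  have hUA : U * A = W * Matrix.diagonal (fun i => |lam i|) * Wᴴ := by
    rw [hU_def]
    conv_lhs => rw [hspec]
    calc W * Matrix.diagonal sgn * Wᴴ * (W * Matrix.diagonal lam * Wᴴ)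
        = W * (Matrix.diagonal sgn * ((Wᴴ * W) * (Matrix.diagonal lam * Wᴴ))) := by
          simp only [mul_assoc]
      _ = W * (Matrix.diagonal sgn * Matrix.diagonal lam) * Wᴴ := by
          rw [hWW', one_mul]; simp only [mul_assoc]
      _ = _ := by rw [habs]
  have htraceWXW : ∀ X : Matrix d d ℝ, (W * X * Wᴴ).trace = X.trace := by
    intro X
    calc (W * X * Wᴴ).trace = (Wᴴ * (W * X)).trace := by
          rw [Matrix.trace_mul_comm]
      _ = ((Wᴴ * W) * X).trace := by rw [mul_assoc]
      _ = X.trace := by rw [hWW', one_mul]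
  -- identify the sqrt
  set B : Matrix d d ℝ := W * Matrix.diagonal (fun i => |lam i|) * Wᴴ with hB_def
  have hBpsd : B.PosSemidef := by
    have hC : (W * Matrix.diagonal (fun i => Real.sqrt |lam i|)) *
        (W * Matrix.diagonal (fun i => Real.sqrt |lam i|))ᴴ = B := by
      rw [Matrix.conjTranspose_mul, hdiagH, hB_def]
      calc W * Matrix.diagonal (fun i => Real.sqrt |lam i|) *
            (Matrix.diagonal (fun i => Real.sqrt |lam i|) * Wᴴ)
          = W * (Matrix.diagonal (fun i => Real.sqrt |lam i|) *
              Matrix.diagonal (fun i => Real.sqrt |lam i|)) * Wᴴ := by simp only [mul_assoc]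
        _ = _ := by
            rw [Matrix.diagonal_mul_diagonal]
            have h : (fun i => Real.sqrt |lam i| * Real.sqrt |lam i|) = fun i => |lam i| := by
              funext i; exact Real.mul_self_sqrt (abs_nonneg _)
            rw [h]
    rw [← hC]
    exact Matrix.posSemidef_self_mul_conjTranspose _
  have hB2 : B ^ 2 = A * Aᴴ := by
    rw [hA.eq]
    conv_rhs => rw [hspec]
    rw [pow_two, hB_def]
    calc W * Matrix.diagonal (fun i => |lam i|) * Wᴴ * (W * Matrix.diagonal (fun i => |lam i|) * Wᴴ)
        = W * (Matrix.diagonal (fun i => |lam i|) * ((Wᴴ * W) *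
            (Matrix.diagonal (fun i => |lam i|) * Wᴴ))) := by simp only [mul_assoc]
      _ = W * (Matrix.diagonal (fun i => |lam i|) * Matrix.diagonal (fun i => |lam i|)) * Wᴴ := by
          rw [hWW', one_mul]; simp only [mul_assoc]
      _ = W * (Matrix.diagonal lam * Matrix.diagonal lam) * Wᴴ := by
          rw [Matrix.diagonal_mul_diagonal, Matrix.diagonal_mul_diagonal]
          have h : (fun i => |lam i| * |lam i|) = fun i => lam i * lam i := by
            funext i; exact abs_mul_abs_self _
          rw [h]
      _ = W * Matrix.diagonal lam * Wᴴ * (W * Matrix.diagonal lam * Wᴴ) := by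
          conv_rhs => rw [show W * Matrix.diagonal lam * Wᴴ * (W * Matrix.diagonal lam * Wᴴ)
            = W * (Matrix.diagonal lam * ((Wᴴ * W) * (Matrix.diagonal lam * Wᴴ))) by
              simp only [mul_assoc]]
          rw [hWW', one_mul]; simp only [mul_assoc]
  have hsqrt : B = (Matrix.posSemidef_self_mul_conjTranspose A).sqrt :=
    psdSqrt_unique hBpsd (Matrix.posSemidef_self_mul_conjTranspose A) hB2
  refine ⟨U, hUherm, hUU, ?_, ?_⟩
  · rw [hUA, ← hsqrt, hB_def]
  · rw [hUA, htraceWXW, Matrix.trace_diagonal]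
    exact Finset.sum_nonneg fun i _ => abs_nonneg _

private lemma trace_list_prod_contraction (L : List (Matrix d d ℝ))
    (hL : ∀ U ∈ L, Uᴴ * U = 1) :
    (L.prod * L.prodᴴ).trace ≤ (Fintype.card d : ℝ) := by
  induction L with
  | nil => simp
  | cons U L ih =>
    have hU : Uᴴ * U = 1 := hL U List.mem_cons_self
    have hL' : ∀ V ∈ L, Vᴴ * V = 1 := fun V hV => hL V (List.mem_cons_of_mem _ hV)
    rw [List.prod_cons, Matrix.conjTranspose_mul]
    calc (U * L.prod * (L.prodᴴ * Uᴴ)).trace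
        = ((U * (L.prod * L.prodᴴ)) * Uᴴ).trace := by simp only [mul_assoc]
      _ = (Uᴴ * (U * (L.prod * L.prodᴴ))).trace := Matrix.trace_mul_comm _ _
      _ = ((Uᴴ * U) * (L.prod * L.prodᴴ)).trace := by rw [mul_assoc]
      _ = (L.prod * L.prodᴴ).trace := by rw [hU, one_mul]
      _ ≤ _ := ih hL'

private lemma trace_list_prod_le (L : List (Matrix d d ℝ))
    (hL : ∀ U ∈ L, Uᴴ * U = 1) :
    L.prod.trace ≤ (Fintype.card d : ℝ) := by
  have h1 : (L.prod.trace) ^ 2 ≤ (Fintype.card d : ℝ) ^ 2 := by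
    have := trace_cs L.prod (1 : Matrix d d ℝ)
    rw [mul_one] at this
    have h2 : ((1 : Matrix d d ℝ) * (1 : Matrix d d ℝ)ᴴ).trace = (Fintype.card d : ℝ) := by
      simp
    rw [h2] at this
    calc (L.prod.trace) ^ 2 ≤ (L.prod * L.prodᴴ).trace * (Fintype.card d : ℝ) := this
      _ ≤ (Fintype.card d : ℝ) * (Fintype.card d : ℝ) := by
          refine mul_le_mul_of_nonneg_right (trace_list_prod_contraction L hL) ?_
          positivity
      _ = (Fintype.card d : ℝ) ^ 2 := (sq _).symm
  have h2 : |L.prod.trace| ≤ (Fintype.card d : ℝ) := by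
    have h3 := Real.sqrt_le_sqrt h1
    rwa [Real.sqrt_sq_eq_abs, Real.sqrt_sq (by positivity : (0:ℝ) ≤ (Fintype.card d : ℝ))] at h3
  exact (le_abs_self _).trans h2

end MatrixFacts

/-! ### Hypercube Fourier preliminaries -/

private def chi {n : ℕ} (S : Finset (Fin n)) (x : Fin n → Bool) : ℝ :=
  ∏ i ∈ S, (if x i then (-1 : ℝ) else 1)

private lemma sum_pow_eq {R : Type*} [Ring R] {ι : Type*} [DecidableEq ι] (s : Finset ι)
    (A : ι → R) : ∀ m : ℕ, (∑ i ∈ s, A i) ^ m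
      = ∑ t ∈ Fintype.piFinset (fun _ : Fin m => s), (List.ofFn (fun k => A (t k))).prod
  | 0 => by
      rw [pow_zero]
      have h : ∀ t ∈ Fintype.piFinset (fun _ : Fin 0 => s),
          (List.ofFn (fun k => A (t k))).prod = (1 : R) := by
        intro t _
        simp
      rw [Finset.sum_congr rfl h, Finset.sum_const, Fintype.card_piFinset]
      simp
  | (m + 1) => by
      rw [pow_succ', sum_pow_eq s A m, Finset.sum_mul_sum, ← Finset.sum_product']
      refine Finset.sum_nbij' (fun p => Fin.cons p.1 p.2) (fun t => (t 0, fun k => t k.succ))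
        ?_ ?_ ?_ ?_ ?_
      · intro p hp
        obtain ⟨h1, h2⟩ := Finset.mem_product.mp hp
        rw [Fintype.mem_piFinset]
        intro k
        refine Fin.cases ?_ ?_ k
        · simpa using h1
        · intro kk
          simpa using (Fintype.mem_piFinset.mp h2) kk
      · intro t ht
        refine Finset.mem_product.mpr ⟨?_, ?_⟩
        · simpa using (Fintype.mem_piFinset.mp ht) 0
        · rw [Fintype.mem_piFinset]
          intro k
          exact (Fintype.mem_piFinset.mp ht) k.succ
      · intro p _
        refine Prod.ext ?_ ?_ <;> simp
      · intro t _
        funext k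
        refine Fin.cases ?_ ?_ k <;> simp
      · intro p _
        rw [List.ofFn_succ]
        rw [List.prod_cons]
        simp

private lemma listprod_smul {d : Type*} [Fintype d] [DecidableEq d] :
    ∀ (m : ℕ) (c : Fin m → ℝ) (U : Fin m → Matrix d d ℝ),
      (List.ofFn (fun k => c k • U k)).prod = (∏ k, c k) • (List.ofFn U).prod
  | 0, c, U => by simp
  | (m + 1), c, U => by
      simp only [List.ofFn_succ, List.prod_cons]
      rw [listprod_smul m (fun k => c k.succ) (fun k => U k.succ), Fin.prod_univ_succ,
        smul_mul_assoc, mul_smul_comm, smul_smul]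

private lemma sum_prod_chi {n q : ℕ} (t : Fin q → Finset (Fin n)) :
    ∑ x : Fin n → Bool, ∏ k, chi (t k) x
      = ∏ i : Fin n, (if Even ((univ.filter (fun k => i ∈ t k)).card) then (2 : ℝ) else 0) := by
  classical
  have step1 : ∀ x : Fin n → Bool, ∏ k, chi (t k) x
      = ∏ i : Fin n, (if x i then (-1 : ℝ) else 1) ^ ((univ.filter (fun k => i ∈ t k)).card) := by
    intro x
    have h1 : ∀ k, chi (t k) x
        = ∏ i : Fin n, (if i ∈ t k then (if x i then (-1 : ℝ) else 1) else 1) := by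
      intro k
      have h2 : (univ : Finset (Fin n)).filter (fun i => i ∈ t k) = t k := by
        ext i; simp
      have h4 := Finset.prod_filter (s := (univ : Finset (Fin n))) (fun i => i ∈ t k) (fun i => if x i then (-1 : ℝ) else 1)
      rw [h2] at h4
      rw [chi, ← h4]
    rw [Finset.prod_congr rfl (fun k _ => h1 k), Finset.prod_comm]
    refine Finset.prod_congr rfl fun i _ => ?_
    rw [← Finset.prod_filter, Finset.prod_const]
  rw [Finset.sum_congr rfl (fun x _ => step1 x)]
  have h3 := Finset.prod_univ_sum (fun _ : Fin n => (univ : Finset Bool))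
    (fun i b => (if b then (-1 : ℝ) else 1) ^ ((univ.filter (fun k => i ∈ t k)).card))
  rw [Fintype.piFinset_univ] at h3
  rw [← h3]
  refine Finset.prod_congr rfl fun i _ => ?_
  rw [Fintype.sum_bool]
  rw [if_pos rfl, if_neg (by simp : ¬ (false = true))]
  rcases Nat.even_or_odd ((univ.filter (fun k => i ∈ t k)).card) with h | h
  · rw [if_pos h, h.neg_one_pow, one_pow]; norm_num
  · rw [if_neg (Nat.not_even_iff_odd.mpr h), h.neg_one_pow, one_pow]; ring

/-! ### The binomial coefficient inequality -/

private lemma choose_le (p : ℕ) : ∀ j : ℕ, j ≤ p →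
    (((2 * p).choose (2 * j) : ℕ) : ℝ) ≤ (2 * (p : ℝ)) ^ j * ((p.choose j : ℕ) : ℝ) := by
  intro j
  induction j with
  | zero => intro _; simp
  | succ j ih =>
    intro hj1
    have hj : j < p := lt_of_lt_of_le (Nat.lt_succ_self j) hj1
    have ihj := ih hj.le
    set P : ℝ := (p : ℝ) with hP_def
    set J : ℝ := (j : ℝ) with hJ_def
    have hJP : J + 1 ≤ P := by
      rw [hP_def, hJ_def]
      exact_mod_cast hj1
    have hJ0 : (0 : ℝ) ≤ J := by positivity
    have hP0 : (0 : ℝ) < P := lt_of_lt_of_le (by linarith) hJP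
    -- cast the three recurrences
    have h1 : (((2 * p).choose (2 * j + 1) : ℕ) : ℝ) * (2 * J + 1)
        = (((2 * p).choose (2 * j) : ℕ) : ℝ) * (2 * P - 2 * J) := by
      have h := Nat.choose_succ_right_eq (2 * p) (2 * j)
      have hle : 2 * j ≤ 2 * p := by omega
      have h' := congrArg (Nat.cast : ℕ → ℝ) h
      push_cast [Nat.cast_sub hle] at h'
      rw [hP_def, hJ_def]
      push_cast
      linarith [h']
    have h2 : (((2 * p).choose (2 * j + 2) : ℕ) : ℝ) * (2 * J + 2)
        = (((2 * p).choose (2 * j + 1) : ℕ) : ℝ) * (2 * P - 2 * J - 1) := by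
      have h := Nat.choose_succ_right_eq (2 * p) (2 * j + 1)
      have hle : 2 * j + 1 ≤ 2 * p := by omega
      have h' := congrArg (Nat.cast : ℕ → ℝ) h
      push_cast [Nat.cast_sub hle] at h'
      rw [hP_def, hJ_def]
      push_cast
      linarith [h']
    have h3 : ((p.choose (j + 1) : ℕ) : ℝ) * (J + 1) = ((p.choose j : ℕ) : ℝ) * (P - J) := by
      have h := Nat.choose_succ_right_eq p j
      have hle : j ≤ p := hj.le
      have h' := congrArg (Nat.cast : ℕ → ℝ) h
      push_cast [Nat.cast_sub hle] at h'
      rw [hP_def, hJ_def]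
      push_cast
      linarith [h']
    set A0 : ℝ := (((2 * p).choose (2 * j) : ℕ) : ℝ)
    set A1 : ℝ := (((2 * p).choose (2 * j + 1) : ℕ) : ℝ)
    set A2 : ℝ := (((2 * p).choose (2 * j + 2) : ℕ) : ℝ)
    set B0 : ℝ := ((p.choose j : ℕ) : ℝ)
    set B1 : ℝ := ((p.choose (j + 1) : ℕ) : ℝ)
    have key : A2 * ((2 * J + 1) * (2 * J + 2)) = A0 * ((2 * P - 2 * J) * (2 * P - 2 * J - 1)) := by
      linear_combination (2 * J + 1) * h2 + (2 * P - 2 * J - 1) * h1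
    have hB0 : (0 : ℝ) ≤ B0 := by positivity
    have hgap1 : (0 : ℝ) ≤ 2 * P - 2 * J := by linarith
    have hgap2 : (0 : ℝ) ≤ 2 * P - 2 * J - 1 := by linarith
    have hpow : (0 : ℝ) ≤ (2 * P) ^ j := by positivity
    -- main chain, after multiplying by the positive quantity (2J+1)(2J+2)
    have hmulpos : (0 : ℝ) < (2 * J + 1) * (2 * J + 2) := by nlinarith
    rw [show 2 * (j + 1) = 2 * j + 2 by ring]
    rw [← mul_le_mul_iff_left₀ hmulpos, key]
    have step1 : A0 * ((2 * P - 2 * J) * (2 * P - 2 * J - 1))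
        ≤ (2 * P) ^ j * B0 * ((2 * P - 2 * J) * (2 * P - 2 * J - 1)) := by
      refine mul_le_mul_of_nonneg_right ihj ?_
      exact mul_nonneg hgap1 hgap2
    have step2 : (2 * P) ^ j * B0 * ((2 * P - 2 * J) * (2 * P - 2 * J - 1))
        ≤ (2 * P) ^ (j + 1) * B1 * ((2 * J + 1) * (2 * J + 2)) := by
      have e1 : (2 * P) ^ (j + 1) * B1 * ((2 * J + 1) * (2 * J + 2))
          = (2 * P) ^ j * (2 * P * (2 * J + 1) * 2) * (B1 * (J + 1)) := by ring
      rw [e1, h3]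
      have e2 : (2 * P) ^ j * B0 * ((2 * P - 2 * J) * (2 * P - 2 * J - 1))
          = (2 * P) ^ j * (2 * (2 * P - 2 * J - 1)) * (B0 * (P - J)) := by ring
      rw [e2]
      refine mul_le_mul_of_nonneg_right ?_ (by nlinarith)
      refine mul_le_mul_of_nonneg_left ?_ hpow
      nlinarith [mul_nonneg hP0.le hJ0]
    exact le_trans step1 step2

/-! ### A Hölder-step helper -/

private lemma holder_step {X : Type*} [Fintype X] (w : ℝ) (hw : 0 < w) (G H : X → ℝ)
    (p j : ℕ) (hj0 : 0 < j) (hjp : j < p) :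
    w * ∑ x : X, (H x) ^ (2 * j) * (G x) ^ (2 * (p - j))
      ≤ (w * ∑ x : X, (H x) ^ (2 * p)) ^ ((j : ℝ) / (p : ℝ))
        * (w * ∑ x : X, (G x) ^ (2 * p)) ^ (((p - j : ℕ) : ℝ) / (p : ℝ)) := by
  have hpR : (0 : ℝ) < (p : ℝ) := by exact_mod_cast hj0.trans hjp
  have hjR : (0 : ℝ) < (j : ℝ) := by exact_mod_cast hj0
  have hpjR : (0 : ℝ) < (p : ℝ) - (j : ℝ) := by
    have : (j : ℝ) < (p : ℝ) := by exact_mod_cast hjp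
    linarith
  have hcast : ((p - j : ℕ) : ℝ) = (p : ℝ) - (j : ℝ) := by
    rw [Nat.cast_sub hjp.le]
  set Pr : ℝ := (p : ℝ) / ((p : ℝ) - (j : ℝ)) with hPr_def
  set Qr : ℝ := (p : ℝ) / (j : ℝ) with hQr_def
  have hPr0 : (0 : ℝ) < Pr := by rw [hPr_def]; positivity
  have hQr0 : (0 : ℝ) < Qr := by rw [hQr_def]; positivity
  have hPr1 : 1 < Pr := by
    rw [hPr_def, lt_div_iff₀ hpjR]
    linarith
  have hconj : Pr.HolderConjugate Qr := by
    refine Real.holderConjugate_iff.mpr ⟨hPr1, ?_⟩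
    rw [hPr_def, hQr_def, inv_div, inv_div]
    field_simp
    ring
  set u : X → ℝ := fun x => (G x) ^ 2 with hu_def
  set v : X → ℝ := fun x => (H x) ^ 2 with hv_def
  have hu0 : ∀ x, 0 ≤ u x := fun x => sq_nonneg _
  have hv0 : ∀ x, 0 ≤ v x := fun x => sq_nonneg _
  have hG : ∀ (m : ℕ) (x : X), (G x) ^ (2 * m) = (u x) ^ m := fun m x => pow_mul (G x) 2 m
  have hH : ∀ (m : ℕ) (x : X), (H x) ^ (2 * m) = (v x) ^ m := fun m x => pow_mul (H x) 2 m
  have key : ∀ (c : ℝ) (hc : 0 < c) (m : ℕ) (f : X → ℝ) (hf : ∀ x, 0 ≤ f x)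
      (hm : ((m : ℕ) : ℝ) * c = (p : ℝ)),
      ∀ x, (w ^ (1 / c) * (f x) ^ m) ^ c = w * (f x) ^ p := by
    intro c hc m f hf hm x
    rw [Real.mul_rpow (Real.rpow_nonneg hw.le _) (pow_nonneg (hf x) _)]
    congr 1
    · rw [← Real.rpow_mul hw.le, one_div_mul_cancel hc.ne', Real.rpow_one]
    · rw [← Real.rpow_natCast (f x) m, ← Real.rpow_mul (hf x), hm, Real.rpow_natCast]
  have hmP : ((p - j : ℕ) : ℝ) * Pr = (p : ℝ) := by
    rw [hcast, hPr_def]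
    field_simp
  have hmQ : ((j : ℕ) : ℝ) * Qr = (p : ℝ) := by
    rw [hQr_def]
    field_simp
  have hHold := Real.inner_le_Lp_mul_Lq_of_nonneg (univ : Finset X) hconj
    (f := fun x => w ^ (1 / Pr) * (u x) ^ (p - j))
    (g := fun x => w ^ (1 / Qr) * (v x) ^ j)
    (fun x _ => mul_nonneg (Real.rpow_nonneg hw.le _) (pow_nonneg (hu0 x) _))
    (fun x _ => mul_nonneg (Real.rpow_nonneg hw.le _) (pow_nonneg (hv0 x) _))
  have hLHS : ∑ x : X, (w ^ (1 / Pr) * (u x) ^ (p - j)) * (w ^ (1 / Qr) * (v x) ^ j)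
      = w * ∑ x : X, (H x) ^ (2 * j) * (G x) ^ (2 * (p - j)) := by
    rw [Finset.mul_sum]
    refine Finset.sum_congr rfl fun x _ => ?_
    have hww : w ^ (1 / Pr) * w ^ (1 / Qr) = w := by
      rw [← Real.rpow_add hw, one_div, one_div, hconj.inv_add_inv_eq_one, Real.rpow_one]
    calc (w ^ (1 / Pr) * (u x) ^ (p - j)) * (w ^ (1 / Qr) * (v x) ^ j)
        = (w ^ (1 / Pr) * w ^ (1 / Qr)) * ((v x) ^ j * (u x) ^ (p - j)) := by ring
      _ = w * ((H x) ^ (2 * j) * (G x) ^ (2 * (p - j))) := by rw [hww, hG, hH]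
  have hPsum : ∑ x : X, (w ^ (1 / Pr) * (u x) ^ (p - j)) ^ Pr = w * ∑ x : X, (G x) ^ (2 * p) := by
    rw [Finset.mul_sum]
    refine Finset.sum_congr rfl fun x _ => ?_
    rw [key Pr hPr0 (p - j) u hu0 hmP x, hG]
  have hQsum : ∑ x : X, (w ^ (1 / Qr) * (v x) ^ j) ^ Qr = w * ∑ x : X, (H x) ^ (2 * p) := by
    rw [Finset.mul_sum]
    refine Finset.sum_congr rfl fun x _ => ?_
    rw [key Qr hQr0 j v hv0 hmQ x, hH]
  rw [hLHS, hPsum, hQsum] at hHold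
  have hePr : 1 / Pr = ((p - j : ℕ) : ℝ) / (p : ℝ) := by
    rw [hcast, hPr_def, one_div_div]
  have heQr : 1 / Qr = ((j : ℕ) : ℝ) / (p : ℝ) := by
    rw [hQr_def, one_div_div]
  rw [hePr, heQr] at hHold
  calc w * ∑ x : X, (H x) ^ (2 * j) * (G x) ^ (2 * (p - j))
      ≤ (w * ∑ x : X, (G x) ^ (2 * p)) ^ (((p - j : ℕ) : ℝ) / (p : ℝ))
        * (w * ∑ x : X, (H x) ^ (2 * p)) ^ (((j : ℕ) : ℝ) / (p : ℝ)) := hHold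
    _ = _ := by ring

/-! ### Hypercontractivity for even moments on the Boolean cube -/

private lemma hyper (n p : ℕ) (hp : 1 ≤ p) (s : Finset (Fin n)) :
    ∀ b : Finset (Fin n) → ℝ, (∀ S, b S ≠ 0 → S ⊆ s) →
      ((2 : ℝ) ^ n)⁻¹ * ∑ x : Fin n → Bool,
          (∑ S : Finset (Fin n), (Real.sqrt (2 * p))⁻¹ ^ S.card * b S * chi S x) ^ (2 * p)
        ≤ (∑ S : Finset (Fin n), b S ^ 2) ^ p := by
  classical
  have hppos : (0 : ℝ) < (p : ℝ) := by exact_mod_cast hp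
  have hq0 : (0 : ℝ) < 2 * (p : ℝ) := by linarith
  induction s using Finset.induction_on with
  | empty =>
    intro b hb
    have hbS : ∀ S : Finset (Fin n), S ≠ ∅ → b S = 0 := by
      intro S hS
      by_contra h
      exact hS (Finset.subset_empty.mp (hb S h))
    have hx : ∀ x : Fin n → Bool,
        (∑ S : Finset (Fin n), (Real.sqrt (2 * p))⁻¹ ^ S.card * b S * chi S x) = b ∅ := by
      intro x
      rw [Finset.sum_eq_single (∅ : Finset (Fin n))
        (fun S _ hS => by rw [hbS S hS]; ring)
        (fun h => absurd (Finset.mem_univ _) h)]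
      simp [chi]
    have hsum : (∑ S : Finset (Fin n), b S ^ 2) = b ∅ ^ 2 := by
      rw [Finset.sum_eq_single (∅ : Finset (Fin n))
        (fun S _ hS => by rw [hbS S hS]; ring)
        (fun h => absurd (Finset.mem_univ _) h)]
    rw [Finset.sum_congr rfl fun x _ => by rw [hx x], Finset.sum_const, Finset.card_univ, hsum]
    have hcard : ((Fintype.card (Fin n → Bool)) : ℝ) = 2 ^ n := by simp
    rw [nsmul_eq_mul, hcard, pow_mul, ← mul_assoc,
      inv_mul_cancel₀ (by positivity : ((2 : ℝ) ^ n) ≠ 0), one_mul]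
  | @insert i t hit IH =>
    intro b hb
    set σ : ℝ := (Real.sqrt (2 * p))⁻¹ with hσ_def
    have hσ0 : 0 ≤ σ := by rw [hσ_def]; positivity
    have hσsq : σ ^ 2 = (2 * (p : ℝ))⁻¹ := by
      rw [hσ_def, inv_pow, Real.sq_sqrt hq0.le]
    set b0 : Finset (Fin n) → ℝ := fun S => if i ∈ S then 0 else b S with hb0_def
    set b1 : Finset (Fin n) → ℝ := fun T => if i ∈ T then 0 else b (insert i T) with hb1_def
    have hb0s : ∀ S, b0 S ≠ 0 → S ⊆ t := by
      intro S h
      rw [hb0_def] at h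
      by_cases hiS : i ∈ S
      · simp [hiS] at h
      · simp only [hiS, if_false] at h
        exact (Finset.subset_insert_iff_of_notMem hiS).mp (hb S h)
    have hb1s : ∀ T, b1 T ≠ 0 → T ⊆ t := by
      intro T h
      rw [hb1_def] at h
      by_cases hiT : i ∈ T
      · simp [hiT] at h
      · simp only [hiT, if_false] at h
        have h2 : insert i T ⊆ insert i t := hb _ h
        exact (Finset.subset_insert_iff_of_notMem hiT).mp
          ((Finset.subset_insert i T).trans h2)
    set G : (Fin n → Bool) → ℝ :=
      fun x => ∑ S : Finset (Fin n), σ ^ S.card * b0 S * chi S x with hG_def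
    set H : (Fin n → Bool) → ℝ :=
      fun x => ∑ S : Finset (Fin n), σ ^ S.card * b1 S * chi S x with hH_def
    -- decomposition along coordinate i
    have hdec : ∀ x : Fin n → Bool,
        (∑ S : Finset (Fin n), σ ^ S.card * b S * chi S x)
          = G x + (if x i then (-1 : ℝ) else 1) * σ * H x := by
      intro x
      have hsplit := Finset.sum_filter_add_sum_filter_not (univ : Finset (Finset (Fin n)))
        (fun S => i ∈ S) (fun S => σ ^ S.card * b S * chi S x)
      have hGx : ∑ S ∈ univ.filter (fun S => ¬ i ∈ S), σ ^ S.card * b S * chi S x = G x := by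
        rw [hG_def, Finset.sum_filter]
        refine Finset.sum_congr rfl fun S _ => ?_
        by_cases hiS : i ∈ S
        · simp [hb0_def, hiS]
        · simp [hb0_def, hiS]
      have hH2 : H x = ∑ T ∈ univ.filter (fun T => ¬ i ∈ T),
          σ ^ T.card * b (insert i T) * chi T x := by
        rw [hH_def, Finset.sum_filter]
        refine Finset.sum_congr rfl fun T _ => ?_
        by_cases hiT : i ∈ T
        · simp [hb1_def, hiT]
        · simp [hb1_def, hiT]
      have hHx : ∑ S ∈ univ.filter (fun S => i ∈ S), σ ^ S.card * b S * chi S x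
          = (if x i then (-1 : ℝ) else 1) * σ * H x := by
        have hbij : ∑ S ∈ univ.filter (fun S => i ∈ S), σ ^ S.card * b S * chi S x
            = ∑ T ∈ univ.filter (fun T => ¬ i ∈ T),
                σ ^ (insert i T).card * b (insert i T) * chi (insert i T) x := by
          refine Finset.sum_nbij' (fun S => S.erase i) (fun T => insert i T) ?_ ?_ ?_ ?_ ?_
          · intro S hS
            simp only [Finset.mem_filter, Finset.mem_univ, true_and] at hS ⊢
            exact Finset.notMem_erase i S
          · intro T hT
            simp only [Finset.mem_filter, Finset.mem_univ, true_and] at hT ⊢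
            exact Finset.mem_insert_self i T
          · intro S hS
            simp only [Finset.mem_filter, Finset.mem_univ, true_and] at hS
            exact Finset.insert_erase hS
          · intro T hT
            simp only [Finset.mem_filter, Finset.mem_univ, true_and] at hT
            exact Finset.erase_insert hT
          · intro S hS
            simp only [Finset.mem_filter, Finset.mem_univ, true_and] at hS
            rw [Finset.insert_erase hS]
        rw [hbij, hH2, Finset.mul_sum]
        refine Finset.sum_congr rfl fun T hT => ?_
        simp only [Finset.mem_filter, Finset.mem_univ, true_and] at hT
        rw [Finset.card_insert_of_notMem hT]
        rw [show chi (insert i T) x = (if x i then (-1:ℝ) else 1) * chi T x from by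
          rw [chi, chi, Finset.prod_insert hT]]
        rw [pow_succ]
        ring
      rw [← hsplit, hGx, hHx]
      ring
    -- G and H do not depend on the i-th coordinate
    have hupd : ∀ (bb : Finset (Fin n) → ℝ), (∀ S, bb S ≠ 0 → S ⊆ t) →
        ∀ (x : Fin n → Bool) (v : Bool),
        (∑ S : Finset (Fin n), σ ^ S.card * bb S * chi S (Function.update x i v))
          = ∑ S : Finset (Fin n), σ ^ S.card * bb S * chi S x := by
      intro bb hbb x v
      refine Finset.sum_congr rfl fun S _ => ?_
      by_cases hbS : bb S = 0
      · rw [hbS]; ring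
      · have hSt : S ⊆ t := hbb S hbS
        have hchi : chi S (Function.update x i v) = chi S x := by
          rw [chi, chi]
          refine Finset.prod_congr rfl fun j hj => ?_
          have hji : j ≠ i := fun h => hit (h ▸ hSt hj)
          rw [Function.update_of_ne hji]
        rw [hchi]
    have hflip : ∀ x : Fin n → Bool,
        Function.update (Function.update x i (!x i)) i (!(Function.update x i (!x i) i)) = x := by
      intro x
      simp [Function.update_self]
    -- the doubling identity
    have hdouble : (2 : ℝ) * ∑ x : Fin n → Bool,
          (∑ S : Finset (Fin n), σ ^ S.card * b S * chi S x) ^ (2 * p)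
        = ∑ x : Fin n → Bool,
            ((G x + σ * H x) ^ (2 * p) + (G x - σ * H x) ^ (2 * p)) := by
      have hsum2 : ∑ x : Fin n → Bool,
            (∑ S : Finset (Fin n), σ ^ S.card * b S * chi S x) ^ (2 * p)
          = ∑ x : Fin n → Bool,
            (∑ S : Finset (Fin n), σ ^ S.card * b S *
              chi S (Function.update x i (!x i))) ^ (2 * p) := by
        refine Finset.sum_nbij' (fun x => Function.update x i (!x i))
          (fun x => Function.update x i (!x i)) ?_ ?_ ?_ ?_ ?_
        · intro x _; exact Finset.mem_univ _
        · intro x _; exact Finset.mem_univ _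
        · intro x _; exact hflip x
        · intro x _; exact hflip x
        · intro x _
          rw [hflip x]
      rw [two_mul]
      nth_rewrite 2 [hsum2]
      rw [← Finset.sum_add_distrib]
      refine Finset.sum_congr rfl fun x _ => ?_
      rw [hdec x, hdec (Function.update x i (!x i))]
      have heG : G (Function.update x i (!x i)) = G x := hupd b0 hb0s x (!x i)
      have heH : H (Function.update x i (!x i)) = H x := hupd b1 hb1s x (!x i)
      rw [heG, heH, Function.update_self]
      cases hxiv : x i
      · simp only [Bool.not_false]
        norm_num
        ring
      · simp only [Bool.not_true]
        norm_num
        ring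
    -- pointwise binomial identity, even part
    have hbinom : ∀ X Y : ℝ, (Y + X) ^ (2 * p) + (Y - X) ^ (2 * p)
        = 2 * ∑ j ∈ Finset.range (p + 1),
            (((2 * p).choose (2 * j) : ℕ) : ℝ) * X ^ (2 * j) * Y ^ (2 * (p - j)) := by
      intro X Y
      have hadd := add_pow Y X (2 * p)
      have hsub := add_pow Y (-X) (2 * p)
      rw [show Y - X = Y + (-X) by ring, hadd, hsub, ← Finset.sum_add_distrib]
      have hptw : ∀ k ∈ Finset.range (2 * p + 1),
          Y ^ k * X ^ (2 * p - k) * (((2 * p).choose k : ℕ) : ℝ)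
            + Y ^ k * (-X) ^ (2 * p - k) * (((2 * p).choose k : ℕ) : ℝ)
          = (if Even (2 * p - k) then
              2 * (Y ^ k * X ^ (2 * p - k) * (((2 * p).choose k : ℕ) : ℝ)) else 0) := by
        intro k _
        rcases Nat.even_or_odd (2 * p - k) with h | h
        · rw [if_pos h, h.neg_pow]
          ring
        · rw [if_neg (Nat.not_even_iff_odd.mpr h), h.neg_pow]
          ring
      rw [Finset.sum_congr rfl hptw, ← Finset.sum_filter, Finset.mul_sum]
      refine Finset.sum_nbij' (fun k => (2 * p - k) / 2) (fun j => 2 * p - 2 * j) ?_ ?_ ?_ ?_ ?_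
      · intro k hk
        simp only [Finset.mem_filter, Finset.mem_range, Nat.even_iff] at hk
        simp only [Finset.mem_range]
        omega
      · intro j hj
        simp only [Finset.mem_range] at hj
        simp only [Finset.mem_filter, Finset.mem_range, Nat.even_iff]
        omega
      · intro k hk
        simp only [Finset.mem_filter, Finset.mem_range, Nat.even_iff] at hk
        omega
      · intro j hj
        simp only [Finset.mem_range] at hj
        omega
      · intro k hk
        simp only [Finset.mem_filter, Finset.mem_range, Nat.even_iff] at hk
        have e1 : 2 * ((2 * p - k) / 2) = 2 * p - k := by omega
        have e2 : 2 * (p - (2 * p - k) / 2) = k := by omega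
        have hk2p : k ≤ 2 * p := by omega
        rw [e1, e2, Nat.choose_symm hk2p]
        ring
    -- assemble the main expansion
    have hmain : ((2 : ℝ) ^ n)⁻¹ * ∑ x : Fin n → Bool,
          (∑ S : Finset (Fin n), σ ^ S.card * b S * chi S x) ^ (2 * p)
        = ∑ j ∈ Finset.range (p + 1), (((2 * p).choose (2 * j) : ℕ) : ℝ) *
            ((σ ^ 2) ^ j *
              (((2 : ℝ) ^ n)⁻¹ * ∑ x : Fin n → Bool, (H x) ^ (2 * j) * (G x) ^ (2 * (p - j)))) := by
      have h2 : ∑ x : Fin n → Bool,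
            (∑ S : Finset (Fin n), σ ^ S.card * b S * chi S x) ^ (2 * p)
          = 2⁻¹ * ∑ x : Fin n → Bool,
              ((G x + σ * H x) ^ (2 * p) + (G x - σ * H x) ^ (2 * p)) := by
        rw [← hdouble, ← mul_assoc, inv_mul_cancel₀ (two_ne_zero), one_mul]
      rw [h2]
      have h3 : ∀ x : Fin n → Bool,
          (G x + σ * H x) ^ (2 * p) + (G x - σ * H x) ^ (2 * p)
          = 2 * ∑ j ∈ Finset.range (p + 1),
              (((2 * p).choose (2 * j) : ℕ) : ℝ) * (σ * H x) ^ (2 * j) * (G x) ^ (2 * (p - j)) :=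
        fun x => hbinom (σ * H x) (G x)
      rw [Finset.sum_congr rfl fun x _ => h3 x, ← Finset.mul_sum,
        inv_mul_cancel_left₀ (two_ne_zero : (2:ℝ) ≠ 0), Finset.sum_comm, Finset.mul_sum]
      refine Finset.sum_congr rfl fun j _ => ?_
      calc ((2 : ℝ) ^ n)⁻¹ * ∑ x : Fin n → Bool,
            (((2 * p).choose (2 * j) : ℕ) : ℝ) * (σ * H x) ^ (2 * j) * (G x) ^ (2 * (p - j))
          = ∑ x : Fin n → Bool, (((2 * p).choose (2 * j) : ℕ) : ℝ) *
              ((σ ^ 2) ^ j * (((2 : ℝ) ^ n)⁻¹ * ((H x) ^ (2 * j) * (G x) ^ (2 * (p - j))))) := by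
            rw [Finset.mul_sum]
            refine Finset.sum_congr rfl fun x _ => ?_
            rw [mul_pow σ (H x) (2 * j), pow_mul σ 2 j]
            ring
        _ = (((2 * p).choose (2 * j) : ℕ) : ℝ) *
              ((σ ^ 2) ^ j * (((2 : ℝ) ^ n)⁻¹ *
                ∑ x : Fin n → Bool, (H x) ^ (2 * j) * (G x) ^ (2 * (p - j)))) := by
            rw [← Finset.mul_sum, ← Finset.mul_sum, ← Finset.mul_sum]
    -- notation for the two sub-energies
    set EG : ℝ := ((2 : ℝ) ^ n)⁻¹ * ∑ x : Fin n → Bool, (G x) ^ (2 * p) with hEG_def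
    set EH : ℝ := ((2 : ℝ) ^ n)⁻¹ * ∑ x : Fin n → Bool, (H x) ^ (2 * p) with hEH_def
    have hwpos : (0 : ℝ) < ((2 : ℝ) ^ n)⁻¹ := by positivity
    have hEG0 : 0 ≤ EG := by
      rw [hEG_def]
      exact mul_nonneg hwpos.le (Finset.sum_nonneg fun x _ => (even_two_mul p).pow_nonneg _)
    have hEH0 : 0 ≤ EH := by
      rw [hEH_def]
      exact mul_nonneg hwpos.le (Finset.sum_nonneg fun x _ => (even_two_mul p).pow_nonneg _)
    set aG : ℝ := ∑ S : Finset (Fin n), b0 S ^ 2 with haG_def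
    set aH : ℝ := ∑ S : Finset (Fin n), b1 S ^ 2 with haH_def
    have haG0 : 0 ≤ aG := Finset.sum_nonneg fun S _ => sq_nonneg _
    have haH0 : 0 ≤ aH := Finset.sum_nonneg fun S _ => sq_nonneg _
    have hIHG : EG ≤ aG ^ p := IH b0 hb0s
    have hIHH : EH ≤ aH ^ p := IH b1 hb1s
    -- per-term Hölder bound
    have hterm : ∀ j, j ≤ p →
        ((2 : ℝ) ^ n)⁻¹ * ∑ x : Fin n → Bool, (H x) ^ (2 * j) * (G x) ^ (2 * (p - j))
          ≤ aH ^ j * aG ^ (p - j) := by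
      intro j hj
      rcases Nat.eq_zero_or_pos j with rfl | hj0
      · have he : ∀ x : Fin n → Bool,
            (H x) ^ (2 * 0) * (G x) ^ (2 * (p - 0)) = (G x) ^ (2 * p) := by
          intro x; simp
        rw [Finset.sum_congr rfl fun x _ => he x, pow_zero, one_mul, Nat.sub_zero]
        exact hIHG
      rcases eq_or_lt_of_le hj with rfl | hjp
      · have he : ∀ x : Fin n → Bool,
            (H x) ^ (2 * j) * (G x) ^ (2 * (j - j)) = (H x) ^ (2 * j) := by
          intro x; simp [Nat.sub_self]
        rw [Finset.sum_congr rfl fun x _ => he x, Nat.sub_self, pow_zero, mul_one]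
        exact hIHH
      · have hH := holder_step (((2 : ℝ) ^ n)⁻¹) hwpos G H p j hj0 hjp
        refine le_trans hH ?_
        have h1 : EH ^ ((j : ℝ) / (p : ℝ)) ≤ (aH ^ p) ^ ((j : ℝ) / (p : ℝ)) :=
          Real.rpow_le_rpow hEH0 hIHH (by positivity)
        have h2 : EG ^ (((p - j : ℕ) : ℝ) / (p : ℝ)) ≤ (aG ^ p) ^ (((p - j : ℕ) : ℝ) / (p : ℝ)) :=
          Real.rpow_le_rpow hEG0 hIHG (by positivity)
        have h3 : (aH ^ p) ^ ((j : ℝ) / (p : ℝ)) = aH ^ j := by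
          rw [← Real.rpow_natCast aH p, ← Real.rpow_mul haH0]
          rw [show (p : ℝ) * ((j : ℝ) / (p : ℝ)) = (j : ℝ) by field_simp]
          exact Real.rpow_natCast aH j
        have h4 : (aG ^ p) ^ (((p - j : ℕ) : ℝ) / (p : ℝ)) = aG ^ (p - j) := by
          rw [← Real.rpow_natCast aG p, ← Real.rpow_mul haG0]
          rw [show (p : ℝ) * (((p - j : ℕ) : ℝ) / (p : ℝ)) = ((p - j : ℕ) : ℝ) by field_simp]
          exact Real.rpow_natCast aG (p - j)
        calc EH ^ ((j : ℝ) / (p : ℝ)) * EG ^ (((p - j : ℕ) : ℝ) / (p : ℝ))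
            ≤ (aH ^ p) ^ ((j : ℝ) / (p : ℝ)) * (aG ^ p) ^ (((p - j : ℕ) : ℝ) / (p : ℝ)) := by
              refine mul_le_mul h1 h2 (Real.rpow_nonneg hEG0 _) (Real.rpow_nonneg ?_ _)
              positivity
          _ = aH ^ j * aG ^ (p - j) := by rw [h3, h4]
    -- the binomial coefficient comparison
    have hcoef : ∀ j, j ≤ p →
        (((2 * p).choose (2 * j) : ℕ) : ℝ) * (σ ^ 2) ^ j ≤ ((p.choose j : ℕ) : ℝ) := by
      intro j hj
      have h1 := choose_le p j hj
      have h2 : ((σ ^ 2) ^ j : ℝ) = ((2 * (p : ℝ))⁻¹) ^ j := by rw [hσsq]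
      rw [h2]
      have h3 : (0:ℝ) ≤ ((2 * (p : ℝ))⁻¹) ^ j := by positivity
      calc (((2 * p).choose (2 * j) : ℕ) : ℝ) * ((2 * (p : ℝ))⁻¹) ^ j
          ≤ ((2 * (p : ℝ)) ^ j * ((p.choose j : ℕ) : ℝ)) * ((2 * (p : ℝ))⁻¹) ^ j :=
            mul_le_mul_of_nonneg_right h1 h3
        _ = ((2 * (p : ℝ)) ^ j * ((2 * (p : ℝ))⁻¹) ^ j) * ((p.choose j : ℕ) : ℝ) := by
            ring
        _ = ((p.choose j : ℕ) : ℝ) := by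
            rw [← mul_pow, mul_inv_cancel₀ hq0.ne', one_pow, one_mul]
    -- partition of the coefficient mass
    have hpart : aH + aG = ∑ S : Finset (Fin n), b S ^ 2 := by
      have hG' : aG = ∑ S ∈ univ.filter (fun S => ¬ i ∈ S), b S ^ 2 := by
        rw [haG_def, Finset.sum_filter]
        refine Finset.sum_congr rfl fun S _ => ?_
        by_cases hiS : i ∈ S
        · simp [hb0_def, hiS]
        · simp [hb0_def, hiS]
      have hH' : aH = ∑ S ∈ univ.filter (fun S => i ∈ S), b S ^ 2 := by
        rw [haH_def]
        have h5 : ∑ T : Finset (Fin n), b1 T ^ 2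
            = ∑ T ∈ univ.filter (fun T => ¬ i ∈ T), b (insert i T) ^ 2 := by
          rw [Finset.sum_filter]
          refine Finset.sum_congr rfl fun T _ => ?_
          by_cases hiT : i ∈ T
          · simp [hb1_def, hiT]
          · simp [hb1_def, hiT]
        rw [h5]
        refine Finset.sum_nbij' (fun T => insert i T) (fun S => S.erase i) ?_ ?_ ?_ ?_ ?_
        · intro T hT
          simp only [Finset.mem_filter, Finset.mem_univ, true_and] at hT ⊢
          exact Finset.mem_insert_self i T
        · intro S hS
          simp only [Finset.mem_filter, Finset.mem_univ, true_and] at hS ⊢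
          exact Finset.notMem_erase i S
        · intro T hT
          simp only [Finset.mem_filter, Finset.mem_univ, true_and] at hT
          exact Finset.erase_insert hT
        · intro S hS
          simp only [Finset.mem_filter, Finset.mem_univ, true_and] at hS
          exact Finset.insert_erase hS
        · intro T _
          rfl
      rw [hG', hH']
      exact Finset.sum_filter_add_sum_filter_not univ (fun S => i ∈ S) (fun S => b S ^ 2)
    -- put everything together
    rw [hmain]
    calc ∑ j ∈ Finset.range (p + 1), (((2 * p).choose (2 * j) : ℕ) : ℝ) *
            ((σ ^ 2) ^ j *
              (((2 : ℝ) ^ n)⁻¹ * ∑ x : Fin n → Bool, (H x) ^ (2 * j) * (G x) ^ (2 * (p - j))))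
        ≤ ∑ j ∈ Finset.range (p + 1), ((p.choose j : ℕ) : ℝ) * (aH ^ j * aG ^ (p - j)) := by
          refine Finset.sum_le_sum fun j hj => ?_
          have hjp : j ≤ p := Nat.lt_succ_iff.mp (Finset.mem_range.mp hj)
          have hnn : (0:ℝ) ≤ ((2 : ℝ) ^ n)⁻¹ *
              ∑ x : Fin n → Bool, (H x) ^ (2 * j) * (G x) ^ (2 * (p - j)) := by
            refine mul_nonneg hwpos.le (Finset.sum_nonneg fun x _ => ?_)
            exact mul_nonneg ((even_two_mul _).pow_nonneg _) ((even_two_mul _).pow_nonneg _)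
          calc (((2 * p).choose (2 * j) : ℕ) : ℝ) * ((σ ^ 2) ^ j *
                (((2 : ℝ) ^ n)⁻¹ * ∑ x : Fin n → Bool, (H x) ^ (2 * j) * (G x) ^ (2 * (p - j))))
              = ((((2 * p).choose (2 * j) : ℕ) : ℝ) * (σ ^ 2) ^ j) *
                (((2 : ℝ) ^ n)⁻¹ * ∑ x : Fin n → Bool, (H x) ^ (2 * j) * (G x) ^ (2 * (p - j))) := by
                ring
            _ ≤ ((p.choose j : ℕ) : ℝ) * (aH ^ j * aG ^ (p - j)) := by
                refine mul_le_mul (hcoef j hjp) (hterm j hjp) hnn ?_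
                positivity
      _ = (aH + aG) ^ p := by
          rw [add_pow]
          refine Finset.sum_congr rfl fun j _ => ?_
          ring
      _ = (∑ S : Finset (Fin n), b S ^ 2) ^ p := by rw [hpart]

/-- Matrix level-`ℓ` inequality (corollary form): for a density-matrix-valued
function `ρ : {-1,1}ⁿ → 𝒮(ℝ^{2^c})`, for every `ℓ`,
`∑_{|S|=ℓ} (Tr |ρ̂(S)|)² ≤ 2^{Cℓ} ((c/ℓ)^ℓ + 1)` for an absolute constant `C`,
where `|A| = √(A Aᴴ)`. -/
theorem matrix_level_l_inequality :
    ∃ C : ℝ, ∀ (n c ℓ : ℕ), 1 ≤ ℓ →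
      ∀ ρ : (Fin n → Bool) → Matrix (Fin (2 ^ c)) (Fin (2 ^ c)) ℝ,
      (∀ x, (ρ x).PosSemidef) → (∀ x, (ρ x).trace = 1) →
      ∑ S ∈ (Finset.univ : Finset (Finset (Fin n))).filter (fun S => S.card = ℓ),
        ((Matrix.posSemidef_self_mul_conjTranspose
            (((2 : ℝ) ^ n)⁻¹ • ∑ x : Fin n → Bool, (∏ i ∈ S, (if x i then (-1 : ℝ) else 1)) • ρ x)).sqrt).trace ^ 2
        ≤ (2 : ℝ) ^ (C * ℓ) * (((c : ℝ) / ℓ) ^ ℓ + 1) := by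
  classical
  refine ⟨3, ?_⟩
  intro n c ℓ hℓ ρ hpsd htr
  set F : Finset (Finset (Fin n)) := (Finset.univ).filter (fun S => S.card = ℓ) with hF_def
  set Ahat : Finset (Fin n) → Matrix (Fin (2 ^ c)) (Fin (2 ^ c)) ℝ :=
    fun S => ((2 : ℝ) ^ n)⁻¹ • ∑ x : Fin n → Bool, chi S x • ρ x with hAhat_def
  -- each ρ̂(S) is symmetric
  have hherm : ∀ S, (Ahat S).IsHermitian := by
    intro S
    show (((2 : ℝ) ^ n)⁻¹ • ∑ x : Fin n → Bool, chi S x • ρ x)ᴴ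
      = ((2 : ℝ) ^ n)⁻¹ • ∑ x : Fin n → Bool, chi S x • ρ x
    rw [Matrix.conjTranspose_smul, Matrix.conjTranspose_sum, star_trivial]
    congr 1
    refine Finset.sum_congr rfl fun x _ => ?_
    rw [Matrix.conjTranspose_smul, (hpsd x).1.eq, star_trivial]
  choose U hUherm hUU hUtr hUpos using fun S => sign_dual (Ahat S) (hherm S)
  set a : Finset (Fin n) → ℝ := fun S => (U S * Ahat S).trace with ha_def
  have ha0 : ∀ S, 0 ≤ a S := hUpos
  set Q : ℝ := ∑ S ∈ F, a S ^ 2 with hQ_def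
  have hQ0 : 0 ≤ Q := Finset.sum_nonneg fun S _ => sq_nonneg _
  -- the goal is exactly Q ≤ RHS
  have hgoal : ∑ S ∈ F,
      ((Matrix.posSemidef_self_mul_conjTranspose
        (((2 : ℝ) ^ n)⁻¹ • ∑ x : Fin n → Bool, (∏ i ∈ S, (if x i then (-1 : ℝ) else 1)) • ρ x)).sqrt).trace ^ 2
      = Q := by
    rw [hQ_def]
    refine Finset.sum_congr rfl fun S _ => ?_
    exact congrArg (· ^ 2) (hUtr S).symm
  rw [hgoal]
  -- choose the exponent
  have hℓR : (0 : ℝ) < (ℓ : ℝ) := by exact_mod_cast hℓ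
  have hex : ∃ k : ℕ, c ≤ ℓ * 2 ^ k :=
    ⟨c, le_trans (Nat.lt_two_pow_self).le (Nat.le_mul_of_pos_left _ hℓ)⟩
  set k := Nat.find hex with hk_def
  have hk : c ≤ ℓ * 2 ^ k := Nat.find_spec hex
  set p : ℕ := 2 ^ k with hp_def
  have hp1 : 1 ≤ p := Nat.one_le_two_pow
  have hpR : (0 : ℝ) < (p : ℝ) := by exact_mod_cast hp1
  have hq0 : (0 : ℝ) < 2 * (p : ℝ) := by linarith
  -- the dual test matrix
  set M : (Fin n → Bool) → Matrix (Fin (2 ^ c)) (Fin (2 ^ c)) ℝ :=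
    fun x => ∑ S ∈ F, (a S * chi S x) • U S with hM_def
  have hMherm : ∀ x, (M x).IsHermitian := by
    intro x
    show (∑ S ∈ F, (a S * chi S x) • U S)ᴴ = ∑ S ∈ F, (a S * chi S x) • U S
    rw [Matrix.conjTranspose_sum]
    refine Finset.sum_congr rfl fun S _ => ?_
    rw [Matrix.conjTranspose_smul, (hUherm S).eq, star_trivial]
  -- Step 1: Q is an expectation of traces
  have hUAhat : ∀ S, a S
      = ((2 : ℝ) ^ n)⁻¹ * ∑ x : Fin n → Bool, chi S x * (U S * ρ x).trace := by
    intro S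
    show (U S * (((2 : ℝ) ^ n)⁻¹ • ∑ x : Fin n → Bool, chi S x • ρ x)).trace = _
    rw [mul_smul_comm, Finset.mul_sum, Matrix.trace_smul, Matrix.trace_sum, smul_eq_mul]
    congr 1
    refine Finset.sum_congr rfl fun x _ => ?_
    rw [mul_smul_comm, Matrix.trace_smul, smul_eq_mul]
  have hZ : ∀ x, (M x * ρ x).trace = ∑ S ∈ F, (a S * chi S x) * (U S * ρ x).trace := by
    intro x
    show ((∑ S ∈ F, (a S * chi S x) • U S) * ρ x).trace = _
    rw [Finset.sum_mul, Matrix.trace_sum]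
    refine Finset.sum_congr rfl fun S _ => ?_
    rw [smul_mul_assoc, Matrix.trace_smul, smul_eq_mul]
  have hstep1 : Q = ((2 : ℝ) ^ n)⁻¹ * ∑ x : Fin n → Bool, (M x * ρ x).trace := by
    have hswap : ∑ x : Fin n → Bool, (M x * ρ x).trace
        = ∑ S ∈ F, ∑ x : Fin n → Bool, (a S * chi S x) * (U S * ρ x).trace := by
      rw [Finset.sum_congr rfl fun x _ => hZ x]
      exact Finset.sum_comm
    rw [hswap, Finset.mul_sum, hQ_def]
    refine Finset.sum_congr rfl fun S _ => ?_
    have haS : a S ^ 2 = a S * (((2 : ℝ) ^ n)⁻¹ *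
        ∑ x : Fin n → Bool, chi S x * (U S * ρ x).trace) := by
      rw [sq]
      congr 1
      exact hUAhat S
    rw [haS, Finset.mul_sum, Finset.mul_sum, Finset.mul_sum]
    exact Finset.sum_congr rfl fun x _ => by ring
  -- Step 2: Jensen
  have hwsum : ∑ _x : Fin n → Bool, ((2 : ℝ) ^ n)⁻¹ = 1 := by
    rw [Finset.sum_const, Finset.card_univ]
    have hcard : ((Fintype.card (Fin n → Bool)) : ℝ) = 2 ^ n := by simp
    rw [nsmul_eq_mul, hcard, mul_inv_cancel₀ (by positivity)]
  have hjensen : Q ^ (2 * p) ≤ ((2 : ℝ) ^ n)⁻¹ *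
      ∑ x : Fin n → Bool, ((M x * ρ x).trace) ^ (2 * p) := by
    have h := Real.pow_arith_mean_le_arith_mean_pow_of_even (univ : Finset (Fin n → Bool))
      (fun _ => ((2 : ℝ) ^ n)⁻¹) (fun x => (M x * ρ x).trace)
      (fun _ _ => by positivity) hwsum (even_two_mul p)
    rw [hstep1, Finset.mul_sum, Finset.mul_sum]
    exact h
  -- Step 3: moment bound
  have hmom : ∀ x, ((M x * ρ x).trace) ^ (2 * p) ≤ ((M x) ^ (2 * p)).trace := by
    intro x
    have h1 := trace_pow_le (hpsd x) (htr x) k (hMherm x)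
    rw [← hp_def] at h1
    have h2 := trace_mul_le_trace (herm_pow_even_psd (hMherm x) p) (hpsd x) (htr x)
    exact le_trans h1 h2
  -- Step 4: expansion and the dimension factor
  set g : (Fin n → Bool) → ℝ := fun x => ∑ S ∈ F, a S * chi S x with hg_def
  have hscalar : ∀ x, (g x) ^ (2 * p)
      = ∑ t ∈ Fintype.piFinset (fun _ : Fin (2 * p) => F),
          (∏ k', a (t k')) * (∏ k', chi (t k') x) := by
    intro x
    show (∑ S ∈ F, a S * chi S x) ^ (2 * p) = _
    rw [sum_pow_eq F (fun S => a S * chi S x) (2 * p)]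
    refine Finset.sum_congr rfl fun t _ => ?_
    rw [List.prod_ofFn, ← Finset.prod_mul_distrib]
  have hmatrix : ∀ x, ((M x) ^ (2 * p)).trace
      = ∑ t ∈ Fintype.piFinset (fun _ : Fin (2 * p) => F),
          ((∏ k', a (t k')) * (∏ k', chi (t k') x))
            * ((List.ofFn (fun k' => U (t k'))).prod).trace := by
    intro x
    show ((∑ S ∈ F, (a S * chi S x) • U S) ^ (2 * p)).trace = _
    rw [sum_pow_eq F (fun S => (a S * chi S x) • U S) (2 * p), Matrix.trace_sum]
    refine Finset.sum_congr rfl fun t _ => ?_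
    rw [listprod_smul (2 * p) (fun k' => a (t k') * chi (t k') x) (fun k' => U (t k')),
      Matrix.trace_smul, smul_eq_mul, ← Finset.prod_mul_distrib]
  have htracebound : ∀ t : Fin (2 * p) → Finset (Fin n),
      ((List.ofFn (fun k' => U (t k'))).prod).trace ≤ ((2 : ℝ) ^ c) := by
    intro t
    have h := trace_list_prod_le (List.ofFn (fun k' => U (t k')))
      (fun V hV => by
        simp only [List.mem_ofFn, Set.mem_range] at hV
        obtain ⟨k', hk'⟩ := hV
        rw [← hk']
        exact hUU (t k'))
    simpa using h
  have hchi0 : ∀ t : Fin (2 * p) → Finset (Fin n),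
      (0 : ℝ) ≤ ∑ x : Fin n → Bool, ∏ k', chi (t k') x := by
    intro t
    rw [sum_prod_chi t]
    refine Finset.prod_nonneg fun i _ => ?_
    split_ifs <;> norm_num
  have hstep4 : ((2 : ℝ) ^ n)⁻¹ * ∑ x : Fin n → Bool, ((M x) ^ (2 * p)).trace
      ≤ (2 : ℝ) ^ c * (((2 : ℝ) ^ n)⁻¹ * ∑ x : Fin n → Bool, (g x) ^ (2 * p)) := by
    have hL : ∑ x : Fin n → Bool, ((M x) ^ (2 * p)).trace
        = ∑ t ∈ Fintype.piFinset (fun _ : Fin (2 * p) => F),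
            ((∏ k', a (t k')) * (∑ x : Fin n → Bool, ∏ k', chi (t k') x))
              * ((List.ofFn (fun k' => U (t k'))).prod).trace := by
      rw [Finset.sum_congr rfl fun x _ => hmatrix x, Finset.sum_comm]
      refine Finset.sum_congr rfl fun t _ => ?_
      refine Eq.symm ?_
      calc ((∏ k', a (t k')) * (∑ x : Fin n → Bool, ∏ k', chi (t k') x))
            * ((List.ofFn (fun k' => U (t k'))).prod).trace
          = (∑ x : Fin n → Bool, (∏ k', a (t k')) * ∏ k', chi (t k') x)
              * ((List.ofFn (fun k' => U (t k'))).prod).trace := by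
            rw [Finset.mul_sum]
        _ = ∑ x : Fin n → Bool, ((∏ k', a (t k')) * ∏ k', chi (t k') x)
              * ((List.ofFn (fun k' => U (t k'))).prod).trace := by
            rw [Finset.sum_mul]
    have hR : ∑ x : Fin n → Bool, (g x) ^ (2 * p)
        = ∑ t ∈ Fintype.piFinset (fun _ : Fin (2 * p) => F),
            (∏ k', a (t k')) * (∑ x : Fin n → Bool, ∏ k', chi (t k') x) := by
      rw [Finset.sum_congr rfl fun x _ => hscalar x, Finset.sum_comm]
      refine Finset.sum_congr rfl fun t _ => ?_
      rw [Finset.mul_sum]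
    rw [hL, hR]
    calc ((2 : ℝ) ^ n)⁻¹ * ∑ t ∈ Fintype.piFinset (fun _ : Fin (2 * p) => F),
            ((∏ k', a (t k')) * (∑ x : Fin n → Bool, ∏ k', chi (t k') x))
              * ((List.ofFn (fun k' => U (t k'))).prod).trace
        ≤ ((2 : ℝ) ^ n)⁻¹ * ∑ t ∈ Fintype.piFinset (fun _ : Fin (2 * p) => F),
            ((∏ k', a (t k')) * (∑ x : Fin n → Bool, ∏ k', chi (t k') x)) * (2 : ℝ) ^ c := by
          refine mul_le_mul_of_nonneg_left (Finset.sum_le_sum fun t _ => ?_) (by positivity)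
          refine mul_le_mul_of_nonneg_left (htracebound t) ?_
          exact mul_nonneg (Finset.prod_nonneg fun k' _ => ha0 _) (hchi0 t)
      _ = (2 : ℝ) ^ c * (((2 : ℝ) ^ n)⁻¹ * ∑ t ∈ Fintype.piFinset (fun _ : Fin (2 * p) => F),
            (∏ k', a (t k')) * (∑ x : Fin n → Bool, ∏ k', chi (t k') x)) := by
          rw [← Finset.sum_mul]
          ring
  -- Step 5: hypercontractivity
  have hstep5 : ((2 : ℝ) ^ n)⁻¹ * ∑ x : Fin n → Bool, (g x) ^ (2 * p)
      ≤ ((2 * (p : ℝ)) ^ ℓ * Q) ^ p := by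
    set b : Finset (Fin n) → ℝ :=
      fun S => if S ∈ F then (Real.sqrt (2 * p)) ^ ℓ * a S else 0 with hb_def
    have hbg : ∀ x, (∑ S : Finset (Fin n), (Real.sqrt (2 * p))⁻¹ ^ S.card * b S * chi S x)
        = g x := by
      intro x
      rw [show g x = ∑ S ∈ F, a S * chi S x from rfl, hF_def, Finset.sum_filter]
      refine Finset.sum_congr rfl fun S _ => ?_
      by_cases hS : S.card = ℓ
      · rw [if_pos hS]
        have hSF : S ∈ F := by rw [hF_def]; simp [hS]
        simp only [hb_def]
        rw [if_pos hSF, hS, ← mul_assoc, ← mul_pow,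
          inv_mul_cancel₀ (Real.sqrt_ne_zero'.mpr hq0), one_pow, one_mul]
      · rw [if_neg hS]
        have hSF : S ∉ F := by rw [hF_def]; simp [hS]
        simp only [hb_def]
        rw [if_neg hSF]
        ring
    have hbsq : (∑ S : Finset (Fin n), b S ^ 2) = (2 * (p : ℝ)) ^ ℓ * Q := by
      rw [hQ_def, Finset.mul_sum, hF_def, Finset.sum_filter]
      refine Finset.sum_congr rfl fun S _ => ?_
      by_cases hS : S.card = ℓ
      · rw [if_pos hS]
        have hSF : S ∈ F := by rw [hF_def]; simp [hS]
        simp only [hb_def]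
        rw [if_pos hSF, mul_pow, ← pow_mul, mul_comm ℓ 2, pow_mul, Real.sq_sqrt hq0.le]
      · rw [if_neg hS]
        have hSF : S ∉ F := by rw [hF_def]; simp [hS]
        simp only [hb_def]
        rw [if_neg hSF]
        ring
    have h := hyper n p hp1 univ b (fun S _ => Finset.subset_univ S)
    rw [hbsq] at h
    calc ((2 : ℝ) ^ n)⁻¹ * ∑ x : Fin n → Bool, (g x) ^ (2 * p)
        = ((2 : ℝ) ^ n)⁻¹ * ∑ x : Fin n → Bool,
            (∑ S : Finset (Fin n), (Real.sqrt (2 * p))⁻¹ ^ S.card * b S * chi S x) ^ (2 * p) := by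
          congr 1
          exact Finset.sum_congr rfl fun x _ => by rw [hbg x]
      _ ≤ ((2 * (p : ℝ)) ^ ℓ * Q) ^ p := h
  -- combine: Q ^ (2p) ≤ 2^c * ((2p)^ℓ)^p * Q^p
  have hcomb : Q ^ (2 * p) ≤ ((2 : ℝ) ^ c * ((2 * (p : ℝ)) ^ ℓ) ^ p) * Q ^ p := by
    calc Q ^ (2 * p)
        ≤ ((2 : ℝ) ^ n)⁻¹ * ∑ x : Fin n → Bool, ((M x * ρ x).trace) ^ (2 * p) := hjensen
      _ ≤ ((2 : ℝ) ^ n)⁻¹ * ∑ x : Fin n → Bool, ((M x) ^ (2 * p)).trace := by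
          refine mul_le_mul_of_nonneg_left (Finset.sum_le_sum fun x _ => hmom x) (by positivity)
      _ ≤ (2 : ℝ) ^ c * (((2 : ℝ) ^ n)⁻¹ * ∑ x : Fin n → Bool, (g x) ^ (2 * p)) := hstep4
      _ ≤ (2 : ℝ) ^ c * (((2 * (p : ℝ)) ^ ℓ * Q) ^ p) := by
          refine mul_le_mul_of_nonneg_left hstep5 (by positivity)
      _ = ((2 : ℝ) ^ c * ((2 * (p : ℝ)) ^ ℓ) ^ p) * Q ^ p := by
          rw [mul_pow]
          ring
  have hQp : Q ^ p ≤ (2 : ℝ) ^ c * ((2 * (p : ℝ)) ^ ℓ) ^ p := by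
    rcases eq_or_lt_of_le hQ0 with hQ | hQ
    · rw [← hQ, zero_pow (by omega : p ≠ 0)]
      positivity
    · have hQppos : (0 : ℝ) < Q ^ p := pow_pos hQ p
      have h1 : Q ^ p * Q ^ p ≤ ((2 : ℝ) ^ c * ((2 * (p : ℝ)) ^ ℓ) ^ p) * Q ^ p := by
        rw [← pow_add, show p + p = 2 * p by ring]
        exact hcomb
      exact le_of_mul_le_mul_right h1 hQppos
  -- final arithmetic
  set R : ℝ := (2 : ℝ) ^ (3 * ℓ) * (((c : ℝ) / ℓ) ^ ℓ + 1) with hR_def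
  have hdivnn : (0 : ℝ) ≤ (c : ℝ) / ℓ := by positivity
  have hfac : (1 : ℝ) ≤ ((c : ℝ) / ℓ) ^ ℓ + 1 := by
    have := pow_nonneg hdivnn ℓ
    linarith
  have hR0 : 0 ≤ R := by
    rw [hR_def]
    positivity
  have hbase : (2 : ℝ) ^ ℓ * (2 * (p : ℝ)) ^ ℓ ≤ R := by
    rcases Nat.eq_zero_or_pos k with hk0 | hkpos
    · -- p = 1
      have hpone : (p : ℝ) = 1 := by rw [hp_def, hk0]; norm_num
      rw [hpone]
      calc (2 : ℝ) ^ ℓ * (2 * 1) ^ ℓ = 4 ^ ℓ := by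
            rw [mul_one, ← mul_pow]; norm_num
        _ ≤ (2 : ℝ) ^ (3 * ℓ) := by
            rw [pow_mul]
            refine pow_le_pow_left₀ (by norm_num) (by norm_num) ℓ
        _ ≤ R := by
            rw [hR_def]
            exact le_mul_of_one_le_right (by positivity) hfac
    · -- minimality of k
      have hmin : ¬ (c ≤ ℓ * 2 ^ (k - 1)) := Nat.find_min hex (by omega)
      have hlt : (ℓ : ℝ) * 2 ^ (k - 1) < (c : ℝ) := by
        have : ℓ * 2 ^ (k - 1) < c := by omega
        exact_mod_cast this
      have hphalf : 2 * (p : ℝ) = 4 * 2 ^ (k - 1) := by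
        rw [hp_def]
        have he : (2 : ℝ) ^ k = 2 * 2 ^ (k - 1) := by
          rw [← pow_succ']
          congr 1
          omega
        push_cast
        rw [he]
        ring
      have h2p : 2 * (p : ℝ) ≤ 4 * ((c : ℝ) / ℓ) := by
        rw [hphalf]
        have h3 : (2 : ℝ) ^ (k - 1) ≤ (c : ℝ) / ℓ := by
          rw [le_div_iff₀ hℓR]
          nlinarith
        linarith
      calc (2 : ℝ) ^ ℓ * (2 * (p : ℝ)) ^ ℓ
          ≤ (2 : ℝ) ^ ℓ * (4 * ((c : ℝ) / ℓ)) ^ ℓ := by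
            refine mul_le_mul_of_nonneg_left (pow_le_pow_left₀ (by positivity) h2p ℓ) (by positivity)
        _ = (2 : ℝ) ^ (3 * ℓ) * ((c : ℝ) / ℓ) ^ ℓ := by
            rw [mul_pow, pow_mul, ← mul_assoc, ← mul_pow]
            norm_num
        _ ≤ R := by
            rw [hR_def]
            refine mul_le_mul_of_nonneg_left ?_ (by positivity)
            linarith [pow_nonneg hdivnn ℓ]
  have hKR : (2 : ℝ) ^ c * ((2 * (p : ℝ)) ^ ℓ) ^ p ≤ R ^ p := by
    have h2c : (2 : ℝ) ^ c ≤ ((2 : ℝ) ^ ℓ) ^ p := by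
      rw [← pow_mul]
      refine pow_le_pow_right₀ (by norm_num) ?_
      calc c ≤ ℓ * 2 ^ k := hk
        _ = ℓ * p := by rw [hp_def]
    calc (2 : ℝ) ^ c * ((2 * (p : ℝ)) ^ ℓ) ^ p
        ≤ ((2 : ℝ) ^ ℓ) ^ p * ((2 * (p : ℝ)) ^ ℓ) ^ p := by
          refine mul_le_mul_of_nonneg_right h2c (by positivity)
      _ = ((2 : ℝ) ^ ℓ * (2 * (p : ℝ)) ^ ℓ) ^ p := by rw [← mul_pow]
      _ ≤ R ^ p := pow_le_pow_left₀ (by positivity) hbase p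
  have hQR : Q ≤ R := by
    refine le_of_pow_le_pow_left₀ (by omega : p ≠ 0) hR0 ?_
    exact le_trans hQp hKR
  refine le_trans hQR ?_
  rw [hR_def]
  have hrpow : (2 : ℝ) ^ ((3 : ℝ) * (ℓ : ℝ)) = (2 : ℝ) ^ (3 * ℓ : ℕ) := by
    rw [← Real.rpow_natCast 2 (3 * ℓ)]
    congr 1
    push_cast
    ring
  rw [hrpow]
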